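/- Let k1, k2 > 0 be real numbers, let λ1 ≤ λ2 < 0 be real numbers with λ1 + λ2 = −k2 and λ1·λ2 = k1, and let h : ℝ → ℝ be twice differentiable with h''(t) + k2·h'(t) + k1·h(t) ≥ 0 for all t ≥ 0 (the exponential control barrier function constraint). If h(0) ≥ 0 and h'(0) − λ1·h(0) ≥ 0, then h(t) ≥ h(0)·exp(λ1·t) ≥ 0 for all t ≥ 0; i.e., the safe set {h ≥ 0} is forward invariant under the ECBF constraint. -/

import Mathlib

lemma grow_aux (c : ℝ) (f : ℝ → ℝ) (hf : Differentiable ℝ f)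
    (hineq : ∀ t : ℝ, 0 ≤ t → c * f t ≤ deriv f t) :
    ∀ t : ℝ, 0 ≤ t → f 0 * Real.exp (c * t) ≤ f t := by
  set g : ℝ → ℝ := fun t => f t * Real.exp (-c * t) with hg
  have hgd : ∀ t : ℝ, HasDerivAt g ((deriv f t - c * f t) * Real.exp (-c * t)) t := by
    intro t
    have h1 : HasDerivAt (fun t : ℝ => Real.exp (-c * t)) (-c * Real.exp (-c * t)) t := by
      have := ((hasDerivAt_id t).const_mul (-c)).exp
      simpa [mul_comm] using this
    have := (hf t).hasDerivAt.mul h1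
    exact this.congr_deriv (by ring)
  have hmono : MonotoneOn g (Set.Ici (0:ℝ)) := by
    apply monotoneOn_of_deriv_nonneg (convex_Ici 0)
    · exact (hf.mul (by fun_prop)).continuous.continuousOn
    · intro t ht
      exact ((hgd t).differentiableAt).differentiableWithinAt
    · intro t ht
      rw [interior_Ici] at ht
      rw [(hgd t).deriv]
      have := hineq t (le_of_lt ht)
      exact mul_nonneg (by linarith) (Real.exp_pos _).le
  intro t ht
  have := hmono (Set.self_mem_Ici) (Set.mem_Ici.mpr ht) ht
  simp only [hg, mul_zero, neg_zero, Real.exp_zero, mul_one] at this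
  have hpos : 0 < Real.exp (-c * t) := Real.exp_pos _
  have : f 0 * Real.exp (c * t) ≤ f t * Real.exp (-c * t) * Real.exp (c * t) := by
    exact mul_le_mul_of_nonneg_right this (Real.exp_pos _).le
  calc f 0 * Real.exp (c * t) ≤ f t * Real.exp (-c * t) * Real.exp (c * t) := this
    _ = f t := by rw [mul_assoc, ← Real.exp_add]; simp

/-- For `k1, k2 > 0` and real numbers `λ1 ≤ λ2 < 0` with `λ1 + λ2 = −k2` and
`λ1·λ2 = k1`, if `h : ℝ → ℝ` is twice differentiable and satisfies the ECBF constraint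
`h'' + k2·h' + k1·h ≥ 0` for all `t ≥ 0`, and `h(0) ≥ 0` and `h'(0) − λ1·h(0) ≥ 0`, then
`h(t) ≥ h(0)·exp(λ1·t) ≥ 0` for all `t ≥ 0` (forward invariance of the safe set). -/
theorem stmt_10 (k1 k2 lam1 lam2 : ℝ) (hk1 : 0 < k1) (hk2 : 0 < k2)
    (hle : lam1 ≤ lam2) (hneg : lam2 < 0)
    (hsum : lam1 + lam2 = -k2) (hprod : lam1 * lam2 = k1)
    (h : ℝ → ℝ) (hd1 : Differentiable ℝ h) (hd2 : Differentiable ℝ (deriv h))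
    (hecbf : ∀ t : ℝ, 0 ≤ t → 0 ≤ deriv (deriv h) t + k2 * deriv h t + k1 * h t)
    (h0 : 0 ≤ h 0) (h0' : 0 ≤ deriv h 0 - lam1 * h 0) :
    ∀ t : ℝ, 0 ≤ t → h 0 * Real.exp (lam1 * t) ≤ h t ∧ 0 ≤ h 0 * Real.exp (lam1 * t) := by
  set v : ℝ → ℝ := fun t => deriv h t - lam1 * h t with hv
  have hvd : Differentiable ℝ v := hd2.sub (hd1.const_mul lam1)
  have hvderiv : ∀ t : ℝ, deriv v t = deriv (deriv h) t - lam1 * deriv h t := by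
    intro t
    have := ((hd2 t).hasDerivAt.sub ((hd1 t).hasDerivAt.const_mul lam1)).deriv
    exact this
  have hvineq : ∀ t : ℝ, 0 ≤ t → lam2 * v t ≤ deriv v t := by
    intro t ht
    have := hecbf t ht
    rw [hvderiv]
    simp only [hv]
    have ek2 : k2 = -(lam1 + lam2) := by linarith
    have ek1 : k1 = lam1 * lam2 := hprod.symm
    subst ek2 ek1
    have := hecbf t ht
    nlinarith [this]
  have hvpos : ∀ t : ℝ, 0 ≤ t → 0 ≤ v t := by
    intro t ht
    have := grow_aux lam2 v hvd hvineq t ht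
    have hv0 : 0 ≤ v 0 := h0'
    have : 0 ≤ v 0 * Real.exp (lam2 * t) := by positivity
    linarith [grow_aux lam2 v hvd hvineq t ht]
  have hhineq : ∀ t : ℝ, 0 ≤ t → lam1 * h t ≤ deriv h t := by
    intro t ht
    have := hvpos t ht
    simp only [hv] at this
    linarith
  intro t ht
  refine ⟨grow_aux lam1 h hd1 hhineq t ht, by positivity⟩
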